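/- In a pre-abelian category with enough projectives (for every object A there is an epimorphism P → A with P projective), epimorphisms are stable under pullback, i.e., the category is left integral. -/

import Mathlib

open CategoryTheory CategoryTheory.Limits

universe v u

/-- A pre-abelian category with enough projectives is left integral:
epimorphisms are stable under pullback. -/
theorem stmt17 {C : Type u} [Category.{v} C] [Preadditive C] [HasFiniteBiproducts C]
    [HasKernels C] [HasCokernels C]
    (hEnough : ∀ A : C, ∃ (P : C) (p : P ⟶ A), Epi p ∧ Projective P) :
    ∀ ⦃W X Y Z : C⦄ (a : W ⟶ X) (b : W ⟶ Y) (c : X ⟶ Z) (d : Y ⟶ Z),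
      IsPullback a b c d → Epi d → Epi a := by
  intro W X Y Z a b c d hpb hd
  rw [Preadditive.epi_iff_cancel_zero]
  intro T e he
  obtain ⟨P, q, hq, hP⟩ := hEnough X
  -- lift q ≫ c through the epi d using projectivity of P
  obtain ⟨r, hr⟩ : ∃ r : P ⟶ Y, r ≫ d = q ≫ c :=
    ⟨hP.factorThru (q ≫ c) d, Projective.factorThru_comp _ _⟩
  -- use the pullback to get t : P ⟶ W with t ≫ a = q
  obtain ⟨t, ht, -⟩ := PullbackCone.IsLimit.lift' hpb.isLimit q r hr.symm
  rw [hpb.cone_fst] at ht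
  have : q ≫ e = 0 := by
    have h2 : (t ≫ a) ≫ e = 0 := (Category.assoc t a e).trans ((congrArg (fun k => t ≫ k) he).trans Limits.comp_zero)
    rw [ht] at h2
    exact h2
  exact (Preadditive.epi_iff_cancel_zero q).mp hq T e this
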